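/- Fix s > 1 and α ∈ (0, π/2). For the request sequence x₀ = 0, x_i = 2·(−s)^{i−1}, the apex of the feasibility cone of the first i+1 requests (i ≥ 2) is T_i = ((−s)^{i−2}·(1 − s), s^{i−2}·(1 + s)/tan α), and its distance from the origin is o_i = √(s^{2i−4}·(−4s + (1+s)²/sin²α)). -/

import Mathlib

open Real

theorem adversary_cone_apex (s α : ℝ) (hs : 1 < s) (hα : α ∈ Set.Ioo 0 (π/2))
    (i : ℕ) (hi : 2 ≤ i) :
    ((2 * (-s)^(i-2) + 2 * (-s)^(i-1)) / 2 = (-s)^(i-2) * (1 - s) ∧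
      |2 * (-s)^(i-1) - 2 * (-s)^(i-2)| / (2 * Real.tan α)
        = s^(i-2) * (1 + s) / Real.tan α) ∧
    Real.sqrt (((-s)^(i-2) * (1 - s))^2 + (s^(i-2) * (1 + s) / Real.tan α)^2)
      = Real.sqrt (s^(2*i-4) * (-4*s + (1+s)^2 / (Real.sin α)^2)) := by
  obtain ⟨hα1, hα2⟩ := hα
  have hs0 : 0 < s := lt_trans one_pos hs
  have hcos : 0 < Real.cos α := Real.cos_pos_of_mem_Ioo ⟨by linarith [Real.pi_pos], hα2⟩
  have hsin : 0 < Real.sin α := Real.sin_pos_of_pos_of_lt_pi hα1 (by linarith [Real.pi_pos])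
  have htan : Real.tan α = Real.sin α / Real.cos α := Real.tan_eq_sin_div_cos α
  have htan0 : Real.tan α ≠ 0 := by rw [htan]; positivity
  have hk : i - 1 = (i-2) + 1 := by omega
  have h2 : 2*i - 4 = 2*(i-2) := by omega
  refine ⟨⟨?_, ?_⟩, ?_⟩
  · rw [hk, pow_succ]; ring
  · rw [hk, pow_succ]
    have habs : |2 * ((-s)^(i-2) * -s) - 2*(-s)^(i-2)| = 2 * (s^(i-2) * (1+s)) := by
      have : 2 * ((-s)^(i-2) * -s) - 2*(-s)^(i-2) = (-s)^(i-2) * (-(2*(1+s))) := by ring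
      rw [this, abs_mul, abs_pow, abs_neg, abs_neg, abs_of_pos hs0,
        abs_of_pos (by positivity : (0:ℝ) < 2*(1+s))]; ring
    rw [habs]
    field_simp
  · rw [h2]
    congr 1
    have hsq : ((-s)^(i-2))^2 = s^(2*(i-2)) := by
      rw [← pow_mul, mul_comm, pow_mul, neg_sq, ← pow_mul]
    have hsq2 : (s^(i-2))^2 = s^(2*(i-2)) := by rw [← pow_mul, mul_comm]
    have hpy : Real.cos α ^ 2 = 1 - Real.sin α ^ 2 := by
      nlinarith [Real.sin_sq_add_cos_sq α]
    rw [htan, mul_pow, hsq, div_pow, mul_pow, hsq2]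
    have hs2 : Real.sin α ≠ 0 := ne_of_gt hsin
    have hc2 : Real.cos α ≠ 0 := ne_of_gt hcos
    field_simp
    linear_combination ((1+s)^2) * (Real.sin_sq_add_cos_sq α)
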